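/- Let Rᵢ ∈ ℝ^{n×n} be symmetric for i = 1, ..., N, and uᵢ = Φ_{u,i} u for some matrices Φ_{u,i} ∈ ℝ^{n×n} and u ∈ ℝ^n. Partition the indices into R_{>0}, R_{<0}, R_0 according to the sign of λ_max(Rᵢ), and let δ_max = max_{i∈R_{>0}} λ_max(Rᵢ), δ_min = min_{i∈R_{<0}} |λ_max(Rᵢ)|, σ̄_u = ∑_{i∈R_{>0}} σ_max(Φ_{u,i})², ν̄_u = ∑_{i∈R_{<0}} ν_min(Φ_{u,i})². Then ∑_{i=1}^N uᵢᵀ Rᵢ uᵢ ≤ (δ_max σ̄_u − δ_min ν̄_u) ‖u‖². -/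

import Mathlib

open Matrix

/-- For a real matrix, `Aᵀ * A` is Hermitian. -/
theorem transpose_mul_self_isHermitian {m n : Type*} [Fintype m] [Fintype n]
    (A : Matrix m n ℝ) : (Aᵀ * A).IsHermitian := by
  rw [← Matrix.conjTranspose_eq_transpose_of_trivial]
  exact Matrix.isHermitian_conjTranspose_mul_self A

/-- Largest eigenvalue of a Hermitian real matrix. -/
noncomputable def lamMax {n : Type*} [Fintype n] [DecidableEq n] {A : Matrix n n ℝ}
    (hA : A.IsHermitian) : ℝ := ⨆ i, hA.eigenvalues i

/-- Square of the largest singular value: `λ_max (Aᵀ A)`. -/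
noncomputable def sigmaMaxSq {m n : Type*} [Fintype m] [Fintype n] [DecidableEq n]
    (A : Matrix m n ℝ) : ℝ := lamMax (transpose_mul_self_isHermitian A)

/-- Square of the smallest singular value: `λ_min (Aᵀ A)`. -/
noncomputable def nuMinSq {m n : Type*} [Fintype m] [Fintype n] [DecidableEq n]
    (A : Matrix m n ℝ) : ℝ := ⨅ i, (transpose_mul_self_isHermitian A).eigenvalues i

lemma quad_repr {n : Type*} [Fintype n] [DecidableEq n] {A : Matrix n n ℝ}
    (hA : A.IsHermitian) (x : n → ℝ) :
    ∃ y : n → ℝ, (x ⬝ᵥ A *ᵥ x = ∑ i, hA.eigenvalues i * y i ^ 2) ∧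
      x ⬝ᵥ x = ∑ i, y i ^ 2 := by
  set U : Matrix n n ℝ := (hA.eigenvectorUnitary : Matrix n n ℝ) with hUdef
  have hU1 : U * star U = 1 := (Matrix.mem_unitaryGroup_iff).mp hA.eigenvectorUnitary.2
  have hT : Uᵀ = star U := by
    simp [Matrix.star_eq_conjTranspose, Matrix.conjTranspose_eq_transpose_of_trivial]
  have hsU : (star U)ᵀ = U := by rw [← hT, transpose_transpose]
  set y : n → ℝ := star U *ᵥ x with hy
  have hyy : x ⬝ᵥ x = ∑ i, y i ^ 2 := by
    have h1 : y ⬝ᵥ (star U *ᵥ x) = x ⬝ᵥ x := by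
      rw [dotProduct_mulVec, ← mulVec_transpose, hsU, hy, mulVec_mulVec, hU1, one_mulVec]
    rw [← h1, ← hy]
    simp [dotProduct, sq]
  refine ⟨y, ?_, hyy⟩
  conv_lhs => rw [hA.spectral_theorem]
  rw [Unitary.conjStarAlgAut_apply]
  rw [mul_assoc, ← mulVec_mulVec, dotProduct_mulVec, ← mulVec_transpose, hT,
    ← mulVec_mulVec, ← hy]
  simp only [dotProduct, mulVec_diagonal]
  refine Finset.sum_congr rfl fun i _ => ?_
  simp [sq]
  ring

lemma quad_le_lamMax {n : Type*} [Fintype n] [DecidableEq n] {A : Matrix n n ℝ}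
    (hA : A.IsHermitian) (x : n → ℝ) :
    x ⬝ᵥ A *ᵥ x ≤ lamMax hA * (x ⬝ᵥ x) := by
  obtain ⟨y, h1, h2⟩ := quad_repr hA x
  rw [h1, h2, Finset.mul_sum]
  refine Finset.sum_le_sum fun i _ => ?_
  exact mul_le_mul_of_nonneg_right
    (le_ciSup (Set.Finite.bddAbove (Set.finite_range _)) i) (sq_nonneg _)

lemma quad_ge_lamMin {n : Type*} [Fintype n] [DecidableEq n] {A : Matrix n n ℝ}
    (hA : A.IsHermitian) (x : n → ℝ) :
    (⨅ i, hA.eigenvalues i) * (x ⬝ᵥ x) ≤ x ⬝ᵥ A *ᵥ x := by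
  obtain ⟨y, h1, h2⟩ := quad_repr hA x
  rw [h1, h2, Finset.mul_sum]
  refine Finset.sum_le_sum fun i _ => ?_
  exact mul_le_mul_of_nonneg_right
    (ciInf_le (Set.Finite.bddBelow (Set.finite_range _)) i) (sq_nonneg _)

lemma mulVec_self_dot {n : ℕ} (A : Matrix (Fin n) (Fin n) ℝ) (u : Fin n → ℝ) :
    A.mulVec u ⬝ᵥ A.mulVec u = u ⬝ᵥ (Aᵀ * A).mulVec u := by
  rw [← mulVec_mulVec, dotProduct_mulVec, ← mulVec_transpose, dotProduct_comm]

lemma eig_AtA_nonneg {n : ℕ} (A : Matrix (Fin n) (Fin n) ℝ) (i : Fin n) :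
    0 ≤ (transpose_mul_self_isHermitian A).eigenvalues i := by
  have h : (Aᵀ * A).PosSemidef := by
    rw [← Matrix.conjTranspose_eq_transpose_of_trivial]
    exact Matrix.posSemidef_conjTranspose_mul_self A
  exact h.eigenvalues_nonneg i

lemma sigmaMaxSq_nonneg {n : ℕ} (A : Matrix (Fin n) (Fin n) ℝ) : 0 ≤ sigmaMaxSq A :=
  Real.iSup_nonneg (eig_AtA_nonneg A)

lemma nuMinSq_nonneg {n : ℕ} (A : Matrix (Fin n) (Fin n) ℝ) : 0 ≤ nuMinSq A :=
  Real.iInf_nonneg (eig_AtA_nonneg A)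

open Classical in
lemma scheduled_R_bound_aux {N n : ℕ}
    (R : Fin N → Matrix (Fin n) (Fin n) ℝ) (hR : ∀ i, (R i).IsHermitian)
    (Φ : Fin N → Matrix (Fin n) (Fin n) ℝ) (u : Fin n → ℝ)
    (dmax dmin : ℝ) (hdmin0 : 0 ≤ dmin)
    (hmax : ∀ i, 0 < lamMax (hR i) → lamMax (hR i) ≤ dmax)
    (hmin : ∀ i, lamMax (hR i) < 0 → dmin ≤ |lamMax (hR i)|) :
    ∑ i, (Φ i).mulVec u ⬝ᵥ (R i).mulVec ((Φ i).mulVec u) ≤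
      (dmax * ∑ i ∈ Finset.univ.filter fun i => 0 < lamMax (hR i), sigmaMaxSq (Φ i)
      - dmin * ∑ i ∈ Finset.univ.filter fun i => lamMax (hR i) < 0, nuMinSq (Φ i)) *
      (u ⬝ᵥ u) := by
  have huu : (0:ℝ) ≤ u ⬝ᵥ u := Finset.sum_nonneg fun i _ => mul_self_nonneg _
  have key : ∀ i, (Φ i).mulVec u ⬝ᵥ (R i).mulVec ((Φ i).mulVec u) ≤
      (if 0 < lamMax (hR i) then dmax * sigmaMaxSq (Φ i) else 0) * (u ⬝ᵥ u) +
      (if lamMax (hR i) < 0 then -(dmin * nuMinSq (Φ i)) else 0) * (u ⬝ᵥ u) := by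
    intro i
    have hq := quad_le_lamMax (hR i) ((Φ i).mulVec u)
    have hσ : (Φ i).mulVec u ⬝ᵥ (Φ i).mulVec u ≤ sigmaMaxSq (Φ i) * (u ⬝ᵥ u) := by
      rw [mulVec_self_dot]
      exact quad_le_lamMax (transpose_mul_self_isHermitian (Φ i)) u
    have hν : nuMinSq (Φ i) * (u ⬝ᵥ u) ≤ (Φ i).mulVec u ⬝ᵥ (Φ i).mulVec u := by
      rw [mulVec_self_dot]
      exact quad_ge_lamMin (transpose_mul_self_isHermitian (Φ i)) u
    rcases lt_trichotomy (lamMax (hR i)) 0 with hneg | hzero | hpos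
    · rw [if_neg (by linarith), if_pos hneg, zero_mul, zero_add]
      have h1 : lamMax (hR i) * ((Φ i).mulVec u ⬝ᵥ (Φ i).mulVec u) ≤
          lamMax (hR i) * (nuMinSq (Φ i) * (u ⬝ᵥ u)) :=
        mul_le_mul_of_nonpos_left hν (le_of_lt hneg)
      have h2 : lamMax (hR i) ≤ -dmin := by
        have := hmin i hneg
        rw [abs_of_neg hneg] at this
        linarith
      have h3 : lamMax (hR i) * (nuMinSq (Φ i) * (u ⬝ᵥ u)) ≤
          -dmin * (nuMinSq (Φ i) * (u ⬝ᵥ u)) :=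
        mul_le_mul_of_nonneg_right h2 (mul_nonneg (nuMinSq_nonneg _) huu)
      calc (Φ i).mulVec u ⬝ᵥ (R i).mulVec ((Φ i).mulVec u)
          ≤ lamMax (hR i) * ((Φ i).mulVec u ⬝ᵥ (Φ i).mulVec u) := hq
        _ ≤ -dmin * (nuMinSq (Φ i) * (u ⬝ᵥ u)) := le_trans h1 h3
        _ = -(dmin * nuMinSq (Φ i)) * (u ⬝ᵥ u) := by ring
    · rw [if_neg (by linarith), if_neg (by linarith), zero_mul, add_zero]
      calc (Φ i).mulVec u ⬝ᵥ (R i).mulVec ((Φ i).mulVec u)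
          ≤ lamMax (hR i) * ((Φ i).mulVec u ⬝ᵥ (Φ i).mulVec u) := hq
        _ = 0 := by rw [hzero, zero_mul]
    · rw [if_pos hpos, if_neg (by linarith), zero_mul, add_zero]
      have h1 : lamMax (hR i) * ((Φ i).mulVec u ⬝ᵥ (Φ i).mulVec u) ≤
          lamMax (hR i) * (sigmaMaxSq (Φ i) * (u ⬝ᵥ u)) :=
        mul_le_mul_of_nonneg_left hσ (le_of_lt hpos)
      have h3 : lamMax (hR i) * (sigmaMaxSq (Φ i) * (u ⬝ᵥ u)) ≤
          dmax * (sigmaMaxSq (Φ i) * (u ⬝ᵥ u)) :=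
        mul_le_mul_of_nonneg_right (hmax i hpos) (mul_nonneg (sigmaMaxSq_nonneg _) huu)
      calc (Φ i).mulVec u ⬝ᵥ (R i).mulVec ((Φ i).mulVec u)
          ≤ lamMax (hR i) * ((Φ i).mulVec u ⬝ᵥ (Φ i).mulVec u) := hq
        _ ≤ dmax * (sigmaMaxSq (Φ i) * (u ⬝ᵥ u)) := le_trans h1 h3
        _ = dmax * sigmaMaxSq (Φ i) * (u ⬝ᵥ u) := by ring
  calc ∑ i, (Φ i).mulVec u ⬝ᵥ (R i).mulVec ((Φ i).mulVec u)
      ≤ ∑ i, ((if 0 < lamMax (hR i) then dmax * sigmaMaxSq (Φ i) else 0) * (u ⬝ᵥ u) +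
          (if lamMax (hR i) < 0 then -(dmin * nuMinSq (Φ i)) else 0) * (u ⬝ᵥ u)) :=
        Finset.sum_le_sum fun i _ => key i
    _ = (∑ i ∈ Finset.univ.filter fun i => 0 < lamMax (hR i), dmax * sigmaMaxSq (Φ i)) * (u ⬝ᵥ u)
        + (∑ i ∈ Finset.univ.filter fun i => lamMax (hR i) < 0, -(dmin * nuMinSq (Φ i))) * (u ⬝ᵥ u) := by
        rw [Finset.sum_add_distrib, ← Finset.sum_mul, ← Finset.sum_mul,
          Finset.sum_filter, Finset.sum_filter]
    _ = (dmax * ∑ i ∈ Finset.univ.filter fun i => 0 < lamMax (hR i), sigmaMaxSq (Φ i)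
        - dmin * ∑ i ∈ Finset.univ.filter fun i => lamMax (hR i) < 0, nuMinSq (Φ i)) *
        (u ⬝ᵥ u) := by
        rw [← Finset.mul_sum, Finset.sum_neg_distrib, ← Finset.mul_sum]
        ring

open Classical in
theorem scheduled_R_bound {N n : ℕ}
    (R : Fin N → Matrix (Fin n) (Fin n) ℝ) (hR : ∀ i, (R i).IsHermitian)
    (Φ : Fin N → Matrix (Fin n) (Fin n) ℝ) (u : Fin n → ℝ) :
    ∑ i, (Φ i).mulVec u ⬝ᵥ (R i).mulVec ((Φ i).mulVec u) ≤
      ((if h : (Finset.univ.filter fun i => 0 < lamMax (hR i)).Nonempty then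
          (Finset.univ.filter fun i => 0 < lamMax (hR i)).sup' h fun i => lamMax (hR i)
        else 0) *
        ∑ i ∈ Finset.univ.filter fun i => 0 < lamMax (hR i), sigmaMaxSq (Φ i)
      - (if h : (Finset.univ.filter fun i => lamMax (hR i) < 0).Nonempty then
          (Finset.univ.filter fun i => lamMax (hR i) < 0).inf' h fun i => |lamMax (hR i)|
        else 0) *
        ∑ i ∈ Finset.univ.filter fun i => lamMax (hR i) < 0, nuMinSq (Φ i)) *
      (u ⬝ᵥ u) := by
  apply scheduled_R_bound_aux
  · split_ifs with h
    · exact Finset.le_inf' h _ fun i hi => abs_nonneg _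
    · exact le_refl 0
  · intro i hi
    have hmem : i ∈ Finset.univ.filter fun i => 0 < lamMax (hR i) := by
      simp [hi]
    rw [dif_pos ⟨i, hmem⟩]
    exact Finset.le_sup' (fun i => lamMax (hR i)) hmem
  · intro i hi
    have hmem : i ∈ Finset.univ.filter fun i => lamMax (hR i) < 0 := by
      simp [hi]
    rw [dif_pos ⟨i, hmem⟩]
    exact Finset.inf'_le (fun i => |lamMax (hR i)|) hmem
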